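/- Let β ∈ (0,1), a < b, and let u, v : ℝ → ℝ be continuously differentiable on [a, b] with u(a) = 0 and v(b) = 0. Then the fractional integration-by-parts formula holds: ∫ₐᵇ (D^β_{a+} u)(t) · v(t) dt = ∫ₐᵇ u(t) · (D^β_{b−} v)(t) dt. -/

import Mathlib

open MeasureTheory Set intervalIntegral Real

private lemma tri_swap {a b : ℝ} (hab : a ≤ b) {f : ℝ → ℝ → ℝ}
    (hf : Integrable (fun p : ℝ × ℝ => if p.2 ≤ p.1 then f p.1 p.2 else 0)
      ((volume.restrict (Ioc a b)).prod (volume.restrict (Ioc a b)))) :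
    (∫ t in a..b, ∫ τ in a..t, f t τ) = ∫ τ in a..b, ∫ t in τ..b, f t τ := by
  have h1 : (∫ t in a..b, ∫ τ in a..t, f t τ)
      = ∫ t, (∫ τ, (if τ ≤ t then f t τ else 0) ∂(volume.restrict (Ioc a b)))
          ∂(volume.restrict (Ioc a b)) := by
    rw [intervalIntegral.integral_of_le hab]
    refine setIntegral_congr_fun measurableSet_Ioc (fun t ht => ?_)
    have : (fun τ => if τ ≤ t then f t τ else 0) = (Iic t).indicator (f t) := by
      ext τ; simp [Set.indicator_apply]
    rw [this, MeasureTheory.integral_indicator measurableSet_Iic,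
      Measure.restrict_restrict measurableSet_Iic,
      show Iic t ∩ Ioc a b = Ioc a t from by
        ext x; simp only [mem_inter_iff, mem_Iic, mem_Ioc]
        constructor
        · rintro ⟨h1, h2, h3⟩; exact ⟨h2, h1⟩
        · rintro ⟨h1, h2⟩; exact ⟨h2, h1, h2.trans ht.2⟩,
      intervalIntegral.integral_of_le ht.1.le]
  have h2 : (∫ τ in a..b, ∫ t in τ..b, f t τ)
      = ∫ τ, (∫ t, (if τ ≤ t then f t τ else 0) ∂(volume.restrict (Ioc a b)))
          ∂(volume.restrict (Ioc a b)) := by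
    rw [intervalIntegral.integral_of_le hab]
    refine setIntegral_congr_fun measurableSet_Ioc (fun τ hτ => ?_)
    have : (fun t => if τ ≤ t then f t τ else 0)
        = (Ici τ).indicator (fun t => f t τ) := by
      ext t; simp [Set.indicator_apply]
    rw [this, MeasureTheory.integral_indicator measurableSet_Ici,
      Measure.restrict_restrict measurableSet_Ici,
      show Ici τ ∩ Ioc a b = Icc τ b from by
        ext x; simp only [mem_inter_iff, mem_Ici, mem_Ioc, mem_Icc]
        constructor
        · rintro ⟨h1, h2, h3⟩; exact ⟨h1, h3⟩
        · rintro ⟨h1, h2⟩; exact ⟨h1, hτ.1.trans_le h1, h2⟩,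
      integral_Icc_eq_integral_Ioc, intervalIntegral.integral_of_le hτ.2]
  rw [h1, h2, MeasureTheory.integral_integral_swap hf]

private lemma inner_eq {a b : ℝ} (g : ℝ → ℝ) {τ : ℝ} (hτ : τ ∈ Ioc a b) :
    (∫ s, (if τ + s ≤ b then g s else 0) ∂(volume.restrict (Ioc 0 (b - a))))
      = ∫ s in (0:ℝ)..(b - τ), g s := by
  have h : (fun s => if τ + s ≤ b then g s else 0) = (Iic (b - τ)).indicator g := by
    ext s; simp only [Set.indicator_apply, mem_Iic]
    congr 1; simp only [eq_iff_iff]; constructor <;> intro h <;> linarith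
  rw [h, MeasureTheory.integral_indicator measurableSet_Iic,
    Measure.restrict_restrict measurableSet_Iic,
    show Iic (b - τ) ∩ Ioc 0 (b - a) = Ioc 0 (b - τ) from by
      ext x; simp only [mem_inter_iff, mem_Iic, mem_Ioc]
      constructor
      · rintro ⟨h1, h2, h3⟩; exact ⟨h2, h1⟩
      · rintro ⟨h1, h2⟩; refine ⟨h2, h1, by linarith [hτ.1]⟩,
    intervalIntegral.integral_of_le (by linarith [hτ.2])]

private lemma tri_swap2 {a b : ℝ} (hab : a ≤ b) {g : ℝ → ℝ → ℝ}
    (hg : Integrable (fun p : ℝ × ℝ => if p.1 + p.2 ≤ b then g p.1 p.2 else 0)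
      ((volume.restrict (Ioc a b)).prod (volume.restrict (Ioc 0 (b - a))))) :
    (∫ τ in a..b, ∫ s in (0:ℝ)..(b - τ), g τ s)
      = ∫ s in (0:ℝ)..(b - a), ∫ τ in a..(b - s), g τ s := by
  have h1 : (∫ τ in a..b, ∫ s in (0:ℝ)..(b - τ), g τ s)
      = ∫ τ, (∫ s, (if τ + s ≤ b then g τ s else 0) ∂(volume.restrict (Ioc 0 (b - a))))
          ∂(volume.restrict (Ioc a b)) := by
    rw [intervalIntegral.integral_of_le hab]
    exact setIntegral_congr_fun measurableSet_Ioc (fun τ hτ => (inner_eq (g τ) hτ).symm)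
  have h2 : (∫ s in (0:ℝ)..(b - a), ∫ τ in a..(b - s), g τ s)
      = ∫ s, (∫ τ, (if τ + s ≤ b then g τ s else 0) ∂(volume.restrict (Ioc a b)))
          ∂(volume.restrict (Ioc 0 (b - a))) := by
    rw [intervalIntegral.integral_of_le (by linarith)]
    refine setIntegral_congr_fun measurableSet_Ioc (fun s hs => ?_)
    have h : (fun τ => if τ + s ≤ b then g τ s else 0)
        = (Iic (b - s)).indicator (fun τ => g τ s) := by
      ext τ; simp only [Set.indicator_apply, mem_Iic]
      congr 1; simp only [eq_iff_iff]; constructor <;> intro h <;> linarith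
    rw [h, MeasureTheory.integral_indicator measurableSet_Iic,
      Measure.restrict_restrict measurableSet_Iic,
      show Iic (b - s) ∩ Ioc a b = Ioc a (b - s) from by
        ext x; simp only [mem_inter_iff, mem_Iic, mem_Ioc]
        constructor
        · rintro ⟨h1, h2, h3⟩; exact ⟨h2, h1⟩
        · rintro ⟨h1, h2⟩; refine ⟨h2, h1, by linarith [hs.1]⟩,
      intervalIntegral.integral_of_le (by linarith [hs.2])]
  rw [h1, h2, MeasureTheory.integral_integral_swap hg]

private lemma prod_int_helper {a b c d : ℝ} {F : ℝ × ℝ → ℝ} (C : ℝ)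
    (hmeas : AEStronglyMeasurable F
      ((volume.restrict (Ioc a b)).prod (volume.restrict (Ioc c d))))
    (hint : ∀ t ∈ Ioc a b, Integrable (fun τ => F (t, τ)) (volume.restrict (Ioc c d)))
    (hbound : ∀ t ∈ Ioc a b, (∫ τ in Ioc c d, ‖F (t, τ)‖) ≤ C) :
    Integrable F ((volume.restrict (Ioc a b)).prod (volume.restrict (Ioc c d))) := by
  haveI : IsFiniteMeasure (volume.restrict (Ioc a b)) :=
    ⟨by rw [Measure.restrict_apply_univ]; exact measure_Ioc_lt_top⟩
  rw [MeasureTheory.integrable_prod_iff hmeas]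
  constructor
  · filter_upwards [ae_restrict_mem measurableSet_Ioc] with t ht using hint t ht
  · apply Integrable.mono' (integrable_const C) hmeas.norm.integral_prod_right'
    filter_upwards [ae_restrict_mem measurableSet_Ioc] with t ht
    rw [Real.norm_eq_abs, abs_of_nonneg (integral_nonneg fun τ => norm_nonneg _)]
    exact hbound t ht
set_option maxHeartbeats 1600000 in
private lemma key_cont (β a b : ℝ) (hβ0 : 0 < β) (hβ1 : β < 1) (hab : a < b)
    (U U' V V' : ℝ → ℝ) (hU : Continuous U) (hU' : Continuous U')
    (hV : Continuous V) (hV' : Continuous V')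
    (hFTC : ∀ s ∈ Icc (0:ℝ) (b - a),
      (∫ τ in a..(b - s), (U' τ * V (s + τ) + U τ * V' (s + τ))) = 0) :
    (∫ t in a..b, (∫ τ in a..t, (t - τ) ^ (-β) * U' τ) * V t)
      = ∫ t in a..b, -(U t * ∫ τ in t..b, (τ - t) ^ (-β) * V' τ) := by
  have hab' : a ≤ b := hab.le
  have hneg1 : (-1:ℝ) < -β := by linarith
  have h1β : (0:ℝ) < 1 - β := by linarith
  obtain ⟨M, hM0, hMU, hMU', hMV, hMV'⟩ :
      ∃ M, 0 ≤ M ∧ (∀ x ∈ Icc a b, |U x| ≤ M) ∧ (∀ x ∈ Icc a b, |U' x| ≤ M)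
        ∧ (∀ x ∈ Icc a b, |V x| ≤ M) ∧ (∀ x ∈ Icc a b, |V' x| ≤ M) := by
    obtain ⟨M1, h1⟩ := isCompact_Icc.exists_bound_of_continuousOn (hU.continuousOn (s := Icc a b))
    obtain ⟨M2, h2⟩ := isCompact_Icc.exists_bound_of_continuousOn (hU'.continuousOn (s := Icc a b))
    obtain ⟨M3, h3⟩ := isCompact_Icc.exists_bound_of_continuousOn (hV.continuousOn (s := Icc a b))
    obtain ⟨M4, h4⟩ := isCompact_Icc.exists_bound_of_continuousOn (hV'.continuousOn (s := Icc a b))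
    refine ⟨|M1| + |M2| + |M3| + |M4|, by positivity, ?_, ?_, ?_, ?_⟩ <;> intro x hx
    · have := h1 x hx; rw [Real.norm_eq_abs] at this
      have := abs_nonneg M2; have := abs_nonneg M3; have := abs_nonneg M4
      have := le_abs_self M1; linarith
    · have := h2 x hx; rw [Real.norm_eq_abs] at this
      have := abs_nonneg M1; have := abs_nonneg M3; have := abs_nonneg M4
      have := le_abs_self M2; linarith
    · have := h3 x hx; rw [Real.norm_eq_abs] at this
      have := abs_nonneg M1; have := abs_nonneg M2; have := abs_nonneg M4
      have := le_abs_self M3; linarith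
    · have := h4 x hx; rw [Real.norm_eq_abs] at this
      have := abs_nonneg M1; have := abs_nonneg M2; have := abs_nonneg M3
      have := le_abs_self M4; linarith
  have hkmeas : Measurable fun x : ℝ => x ^ (-β) :=
    measurable_of_continuousOn_compl_singleton 0 fun x hx =>
      (Real.continuousAt_rpow_const x (-β) (Or.inl hx)).continuousWithinAt
  have hker : ∀ x y : ℝ, IntervalIntegrable (fun s => s ^ (-β)) volume x y :=
    fun x y => intervalIntegrable_rpow' hneg1
  have hkerc : ∀ t x y : ℝ, IntervalIntegrable (fun τ => (t - τ) ^ (-β)) volume x y := by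
    intro t x y
    have := (hker (t - x) (t - y)).comp_sub_left t
    simpa using this
  have hkval : ∀ x : ℝ, 0 ≤ x → (∫ s in (0:ℝ)..x, s ^ (-β)) = x ^ (1 - β) / (1 - β) := by
    intro x hx
    rw [integral_rpow (Or.inl hneg1), Real.zero_rpow (by linarith : -β + 1 ≠ 0),
      show -β + 1 = 1 - β by ring]
    ring
  have hkvalc : ∀ t, a ≤ t → (∫ τ in a..t, (t - τ) ^ (-β)) = (t - a) ^ (1 - β) / (1 - β) := by
    intro t ht
    rw [show (fun τ => (t - τ) ^ (-β)) = fun τ => (fun x => x ^ (-β)) (t - τ) from rfl,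
      intervalIntegral.integral_comp_sub_left (fun x => x ^ (-β)) t, sub_self]
    exact hkval (t - a) (by linarith)
  set C : ℝ := M * M * ((b - a) ^ (1 - β) / (1 - β)) with hC
  have hCb : ∀ x, 0 ≤ x → x ≤ b - a → M * M * (x ^ (1 - β) / (1 - β)) ≤ C := by
    intro x hx hxb
    have h1 : x ^ (1 - β) ≤ (b - a) ^ (1 - β) := by gcongr
    rw [hC]
    have h2 : x ^ (1-β) / (1-β) ≤ (b-a) ^ (1-β) / (1-β) := by gcongr
    nlinarith [Real.rpow_nonneg hx (1-β)]
  -- Fubini-1 integrand is integrable on the product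
  have hF1 : Integrable
      (fun p : ℝ × ℝ => if p.2 ≤ p.1 then (p.1 - p.2) ^ (-β) * U' p.2 * V p.1 else 0)
      ((volume.restrict (Ioc a b)).prod (volume.restrict (Ioc a b))) := by
    apply prod_int_helper C
    · have hG : AEStronglyMeasurable (fun p : ℝ × ℝ => (p.1 - p.2) ^ (-β) * U' p.2 * V p.1)
          ((volume.restrict (Ioc a b)).prod (volume.restrict (Ioc a b))) := by
        apply Measurable.aestronglyMeasurable
        have hk : Measurable fun p : ℝ × ℝ => (p.1 - p.2) ^ (-β) :=
          hkmeas.comp (measurable_fst.sub measurable_snd)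
        exact (hk.mul (hU'.measurable.comp measurable_snd)).mul (hV.measurable.comp measurable_fst)
      have heq : (fun p : ℝ × ℝ => if p.2 ≤ p.1 then (p.1 - p.2) ^ (-β) * U' p.2 * V p.1 else 0)
          = ({p : ℝ × ℝ | p.2 ≤ p.1}).indicator
              (fun p => (p.1 - p.2) ^ (-β) * U' p.2 * V p.1) := by
        ext p; simp [Set.indicator_apply, mem_setOf_eq]
      rw [heq]
      exact hG.indicator (measurableSet_le measurable_snd measurable_fst)
    · intro t ht
      have heq : (fun τ => if τ ≤ t then (t - τ) ^ (-β) * U' τ * V t else 0)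
          = (Iic t).indicator (fun τ => (t - τ) ^ (-β) * U' τ * V t) := by
        ext τ; simp [Set.indicator_apply]
      rw [heq, MeasureTheory.integrable_indicator_iff measurableSet_Iic, IntegrableOn,
        Measure.restrict_restrict measurableSet_Iic,
        show Iic t ∩ Ioc a b = Ioc a t from by
          ext x; simp only [mem_inter_iff, mem_Iic, mem_Ioc]
          constructor
          · rintro ⟨h1, h2, h3⟩; exact ⟨h2, h1⟩
          · rintro ⟨h1, h2⟩; exact ⟨h2, h1, h2.trans ht.2⟩]
      exact (intervalIntegrable_iff_integrableOn_Ioc_of_le ht.1.le).mp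
        (((hkerc t a t).mul_continuousOn hU'.continuousOn).mul_const (V t))
    · intro t ht
      have htI : t ∈ Icc a b := ⟨ht.1.le, ht.2⟩
      have heq : (fun τ => ‖if τ ≤ t then (t - τ) ^ (-β) * U' τ * V t else 0‖)
          = (Iic t).indicator (fun τ => ‖(t - τ) ^ (-β) * U' τ * V t‖) := by
        ext τ; by_cases h : τ ≤ t <;> simp [Set.indicator_apply, h]
      calc (∫ τ in Ioc a b, ‖if τ ≤ t then (t - τ) ^ (-β) * U' τ * V t else 0‖)
          = ∫ τ in Ioc a t, ‖(t - τ) ^ (-β) * U' τ * V t‖ := by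
            rw [heq, MeasureTheory.integral_indicator measurableSet_Iic,
              Measure.restrict_restrict measurableSet_Iic,
              show Iic t ∩ Ioc a b = Ioc a t from by
                ext x; simp only [mem_inter_iff, mem_Iic, mem_Ioc]
                constructor
                · rintro ⟨h1, h2, h3⟩; exact ⟨h2, h1⟩
                · rintro ⟨h1, h2⟩; exact ⟨h2, h1, h2.trans ht.2⟩]
        _ ≤ ∫ τ in Ioc a t, (t - τ) ^ (-β) * (M * M) := by
            apply setIntegral_mono_on
            · exact ((intervalIntegrable_iff_integrableOn_Ioc_of_le ht.1.le).mp
                (((hkerc t a t).mul_continuousOn hU'.continuousOn).mul_const (V t))).norm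
            · exact (intervalIntegrable_iff_integrableOn_Ioc_of_le ht.1.le).mp
                ((hkerc t a t).mul_const (M * M))
            · exact measurableSet_Ioc
            · intro τ hτ
              have hτI : τ ∈ Icc a b := ⟨hτ.1.le, hτ.2.trans ht.2⟩
              have hk0 : (0:ℝ) ≤ (t - τ) ^ (-β) := Real.rpow_nonneg (by linarith [hτ.2]) _
              rw [Real.norm_eq_abs, abs_mul, abs_mul, abs_of_nonneg hk0]
              calc (t - τ) ^ (-β) * |U' τ| * |V t|
                  = (t - τ) ^ (-β) * (|U' τ| * |V t|) := by ring
                _ ≤ (t - τ) ^ (-β) * (M * M) :=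
                    mul_le_mul_of_nonneg_left
                      (mul_le_mul (hMU' τ hτI) (hMV t htI) (abs_nonneg _) hM0) hk0
        _ = M * M * ((t - a) ^ (1 - β) / (1 - β)) := by
            rw [← intervalIntegral.integral_of_le ht.1.le,
              intervalIntegral.integral_mul_const, hkvalc t ht.1.le]
            ring
        _ ≤ C := hCb (t - a) (by linarith [ht.1.le]) (by linarith [ht.2])
  -- Fubini-2 integrands are integrable on the product
  have hF2 : ∀ (W : ℝ → ℝ → ℝ), Continuous (fun p : ℝ × ℝ => W p.1 p.2) →
      (∀ τ s, a ≤ τ → τ ≤ b → 0 ≤ s → τ + s ≤ b → |W τ s| ≤ M * M) →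
      Integrable (fun p : ℝ × ℝ => if p.1 + p.2 ≤ b then p.2 ^ (-β) * W p.1 p.2 else 0)
        ((volume.restrict (Ioc a b)).prod (volume.restrict (Ioc 0 (b - a)))) := by
    intro W hWc hWb
    apply prod_int_helper C
    · have hG : AEStronglyMeasurable (fun p : ℝ × ℝ => p.2 ^ (-β) * W p.1 p.2)
          ((volume.restrict (Ioc a b)).prod (volume.restrict (Ioc 0 (b - a)))) := by
        apply Measurable.aestronglyMeasurable
        have hk : Measurable fun p : ℝ × ℝ => p.2 ^ (-β) := hkmeas.comp measurable_snd
        exact hk.mul hWc.measurable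
      have heq : (fun p : ℝ × ℝ => if p.1 + p.2 ≤ b then p.2 ^ (-β) * W p.1 p.2 else 0)
          = ({p : ℝ × ℝ | p.1 + p.2 ≤ b}).indicator
              (fun p => p.2 ^ (-β) * W p.1 p.2) := by
        ext p; simp [Set.indicator_apply, mem_setOf_eq]
      rw [heq]
      exact hG.indicator (measurableSet_le (measurable_fst.add measurable_snd) measurable_const)
    · intro τ hτ
      have heq : (fun s => if τ + s ≤ b then s ^ (-β) * W τ s else 0)
          = (Iic (b - τ)).indicator (fun s => s ^ (-β) * W τ s) := by
        ext s; simp only [Set.indicator_apply, mem_Iic]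
        congr 1; simp only [eq_iff_iff]; constructor <;> intro h <;> linarith
      rw [heq, MeasureTheory.integrable_indicator_iff measurableSet_Iic, IntegrableOn,
        Measure.restrict_restrict measurableSet_Iic,
        show Iic (b - τ) ∩ Ioc 0 (b - a) = Ioc 0 (b - τ) from by
          ext x; simp only [mem_inter_iff, mem_Iic, mem_Ioc]
          constructor
          · rintro ⟨h1, h2, h3⟩; exact ⟨h2, h1⟩
          · rintro ⟨h1, h2⟩; refine ⟨h2, h1, by linarith [hτ.1]⟩]
      exact (intervalIntegrable_iff_integrableOn_Ioc_of_le (by linarith [hτ.2])).mp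
        ((hker 0 (b - τ)).mul_continuousOn (hWc.comp (Continuous.prodMk_right τ)).continuousOn)
    · intro τ hτ
      have heq : (fun s => ‖if τ + s ≤ b then s ^ (-β) * W τ s else 0‖)
          = (Iic (b - τ)).indicator (fun s => ‖s ^ (-β) * W τ s‖) := by
        ext s; by_cases h : τ + s ≤ b
        · rw [if_pos h, Set.indicator_of_mem (by simp only [mem_Iic]; linarith)]
        · rw [if_neg h, Set.indicator_of_notMem (by simp only [mem_Iic]; intro hh; exact h (by linarith)), norm_zero]
      calc (∫ s in Ioc 0 (b - a), ‖if τ + s ≤ b then s ^ (-β) * W τ s else 0‖)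
          = ∫ s in Ioc 0 (b - τ), ‖s ^ (-β) * W τ s‖ := by
            rw [heq, MeasureTheory.integral_indicator measurableSet_Iic,
              Measure.restrict_restrict measurableSet_Iic,
              show Iic (b - τ) ∩ Ioc 0 (b - a) = Ioc 0 (b - τ) from by
                ext x; simp only [mem_inter_iff, mem_Iic, mem_Ioc]
                constructor
                · rintro ⟨h1, h2, h3⟩; exact ⟨h2, h1⟩
                · rintro ⟨h1, h2⟩; refine ⟨h2, h1, by linarith [hτ.1]⟩]
        _ ≤ ∫ s in Ioc 0 (b - τ), s ^ (-β) * (M * M) := by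
            apply setIntegral_mono_on
            · exact ((intervalIntegrable_iff_integrableOn_Ioc_of_le (by linarith [hτ.2])).mp
                ((hker 0 (b - τ)).mul_continuousOn (hWc.comp (Continuous.prodMk_right τ)).continuousOn)).norm
            · exact (intervalIntegrable_iff_integrableOn_Ioc_of_le (by linarith [hτ.2])).mp
                ((hker 0 (b - τ)).mul_const (M * M))
            · exact measurableSet_Ioc
            · intro s hs
              have hk0 : (0:ℝ) ≤ s ^ (-β) := Real.rpow_nonneg hs.1.le _
              rw [Real.norm_eq_abs, abs_mul, abs_of_nonneg hk0]
              exact mul_le_mul_of_nonneg_left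
                (hWb τ s hτ.1.le hτ.2 hs.1.le (by linarith [hs.2])) hk0
        _ = M * M * ((b - τ) ^ (1 - β) / (1 - β)) := by
            rw [← intervalIntegral.integral_of_le (by linarith [hτ.2] : (0:ℝ) ≤ b - τ),
              intervalIntegral.integral_mul_const, hkval (b - τ) (by linarith [hτ.2])]
            ring
        _ ≤ C := hCb (b - τ) (by linarith [hτ.2]) (by linarith [hτ.1])
  have hF2X := hF2 (fun τ s => U' τ * V (s + τ))
    (by exact ((hU'.comp continuous_fst).mul (hV.comp (continuous_snd.add continuous_fst))))
    (by
      intro τ s h1 h2 h3 h4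
      rw [abs_mul]
      exact mul_le_mul (hMU' τ ⟨h1, h2⟩) (hMV (s + τ) ⟨by linarith, by linarith⟩)
        (abs_nonneg _) hM0)
  have hF2Y := hF2 (fun τ s => U τ * V' (s + τ))
    (by exact ((hU.comp continuous_fst).mul (hV'.comp (continuous_snd.add continuous_fst))))
    (by
      intro τ s h1 h2 h3 h4
      rw [abs_mul]
      exact mul_le_mul (hMU τ ⟨h1, h2⟩) (hMV' (s + τ) ⟨by linarith, by linarith⟩)
        (abs_nonneg _) hM0)
  have hF2W : Integrable
      (fun p : ℝ × ℝ => if p.1 + p.2 ≤ b then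
        p.2 ^ (-β) * (U' p.1 * V (p.2 + p.1) + U p.1 * V' (p.2 + p.1)) else 0)
      ((volume.restrict (Ioc a b)).prod (volume.restrict (Ioc 0 (b - a)))) := by
    have := hF2X.add hF2Y
    apply this.congr
    refine Filter.Eventually.of_forall fun p => ?_
    by_cases h : p.1 + p.2 ≤ b <;> simp only [Pi.add_apply, h, ite_true, ite_false] <;> ring
  -- Step 1 : Fubini + substitution on the left-hand side
  have step1 : (∫ t in a..b, (∫ τ in a..t, (t - τ) ^ (-β) * U' τ) * V t)
      = ∫ τ in a..b, ∫ s in (0:ℝ)..(b - τ), s ^ (-β) * (U' τ * V (s + τ)) := by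
    have e1 : (∫ t in a..b, (∫ τ in a..t, (t - τ) ^ (-β) * U' τ) * V t)
        = ∫ t in a..b, ∫ τ in a..t, (t - τ) ^ (-β) * U' τ * V t := by
      refine intervalIntegral.integral_congr fun t _ => ?_
      rw [← intervalIntegral.integral_mul_const]
    rw [e1, tri_swap hab' hF1]
    refine intervalIntegral.integral_congr fun τ hτ => ?_
    have h := intervalIntegral.integral_comp_add_right (a := (0:ℝ)) (b := b - τ)
      (fun x => (x - τ) ^ (-β) * U' τ * V x) τ
    rw [zero_add, sub_add_cancel] at h
    rw [← h]
    refine intervalIntegral.integral_congr fun s _ => ?_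
    rw [add_sub_cancel_right]; ring
  -- Step 2 : substitution on the right-hand side
  have step2 : ∀ t, (∫ τ in t..b, (τ - t) ^ (-β) * V' τ)
      = ∫ s in (0:ℝ)..(b - t), s ^ (-β) * V' (s + t) := by
    intro t
    have h := intervalIntegral.integral_comp_add_right (a := (0:ℝ)) (b := b - t)
      (fun x => (x - t) ^ (-β) * V' x) t
    rw [zero_add, sub_add_cancel] at h
    rw [← h]
    refine intervalIntegral.integral_congr fun s _ => ?_
    rw [add_sub_cancel_right]
  -- interval integrability of the two outer integrands
  have hXint : IntervalIntegrable
      (fun τ => ∫ s in (0:ℝ)..(b - τ), s ^ (-β) * (U' τ * V (s + τ))) volume a b := by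
    rw [intervalIntegrable_iff_integrableOn_Ioc_of_le hab']
    apply hF2X.integral_prod_left.congr
    filter_upwards [ae_restrict_mem measurableSet_Ioc] with τ hτ
    exact inner_eq (fun s => s ^ (-β) * (U' τ * V (s + τ))) hτ
  have hYint : IntervalIntegrable
      (fun τ => ∫ s in (0:ℝ)..(b - τ), s ^ (-β) * (U τ * V' (s + τ))) volume a b := by
    rw [intervalIntegrable_iff_integrableOn_Ioc_of_le hab']
    apply hF2Y.integral_prod_left.congr
    filter_upwards [ae_restrict_mem measurableSet_Ioc] with τ hτ
    exact inner_eq (fun s => s ^ (-β) * (U τ * V' (s + τ))) hτ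
  -- the sum of the two outer integrals vanishes
  have goal' : (∫ τ in a..b, ∫ s in (0:ℝ)..(b - τ), s ^ (-β) * (U' τ * V (s + τ)))
      + (∫ τ in a..b, ∫ s in (0:ℝ)..(b - τ), s ^ (-β) * (U τ * V' (s + τ))) = 0 := by
    rw [← intervalIntegral.integral_add hXint hYint]
    have e : (∫ τ in a..b, ((∫ s in (0:ℝ)..(b - τ), s ^ (-β) * (U' τ * V (s + τ)))
          + ∫ s in (0:ℝ)..(b - τ), s ^ (-β) * (U τ * V' (s + τ))))
        = ∫ τ in a..b, ∫ s in (0:ℝ)..(b - τ),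
            s ^ (-β) * (U' τ * V (s + τ) + U τ * V' (s + τ)) := by
      refine intervalIntegral.integral_congr fun τ _ => ?_
      rw [← intervalIntegral.integral_add
        ((hker 0 (b - τ)).mul_continuousOn (by fun_prop)
          )
        ((hker 0 (b - τ)).mul_continuousOn (by fun_prop)
          )]
      refine intervalIntegral.integral_congr fun s _ => ?_
      ring
    rw [e, tri_swap2 hab' hF2W]
    have e2 : ∀ s ∈ Set.uIcc (0:ℝ) (b - a),
        (∫ τ in a..(b - s), s ^ (-β) * (U' τ * V (s + τ) + U τ * V' (s + τ))) = 0 := by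
      intro s hs
      rw [uIcc_of_le (by linarith)] at hs
      rw [intervalIntegral.integral_const_mul, hFTC s hs, mul_zero]
    rw [intervalIntegral.integral_congr e2]
    simp
  rw [step1]
  have rhs_eq : (∫ t in a..b, -(U t * ∫ τ in t..b, (τ - t) ^ (-β) * V' τ))
      = -(∫ τ in a..b, ∫ s in (0:ℝ)..(b - τ), s ^ (-β) * (U τ * V' (s + τ))) := by
    rw [intervalIntegral.integral_neg]
    congr 1
    refine intervalIntegral.integral_congr fun t _ => ?_
    rw [step2 t, ← intervalIntegral.integral_const_mul]
    exact intervalIntegral.integral_congr fun s _ => by ring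
  rw [rhs_eq]
  linarith [goal']

/-- Fractional integration by parts: for `β ∈ (0,1)` and `u, v` continuously
differentiable on `[a,b]` with `u(a) = 0` and `v(b) = 0`,
`∫ₐᵇ (D^β_{a+} u)(t)·v(t) dt = ∫ₐᵇ u(t)·(D^β_{b−} v)(t) dt`, where
`(D^β_{a+} u)(t) = (1/Γ(1−β)) ∫ₐᵗ (t−τ)^{−β} u′(τ) dτ` and
`(D^β_{b−} v)(t) = −(1/Γ(1−β)) ∫ₜᵇ (τ−t)^{−β} v′(τ) dτ`. -/
theorem fractional_integration_by_parts (β a b : ℝ)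
    (hβ : β ∈ Set.Ioo (0 : ℝ) 1) (hab : a < b)
    (u u' v v' : ℝ → ℝ)
    (hu : ∀ t ∈ Set.Icc a b, HasDerivAt u (u' t) t)
    (hu' : ContinuousOn u' (Set.Icc a b))
    (hv : ∀ t ∈ Set.Icc a b, HasDerivAt v (v' t) t)
    (hv' : ContinuousOn v' (Set.Icc a b))
    (hua : u a = 0) (hvb : v b = 0) :
    ∫ t in a..b,
        ((1 / Real.Gamma (1 - β)) * ∫ τ in a..t, (t - τ) ^ (-β) * u' τ) * v t
      = ∫ t in a..b,
          u t * (-(1 / Real.Gamma (1 - β)) * ∫ τ in t..b, (τ - t) ^ (-β) * v' τ) := by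
  obtain ⟨hβ0, hβ1⟩ := hβ
  -- clamping map and continuous extensions
  set Q : ℝ → ℝ := fun x => max a (min b x) with hQ
  have hQc : Continuous Q := continuous_const.max (continuous_const.min continuous_id)
  have hQmem : ∀ x, Q x ∈ Icc a b :=
    fun x => ⟨le_max_left _ _, max_le hab.le (min_le_left _ _)⟩
  have hQid : ∀ x ∈ Icc a b, Q x = x := by
    intro x hx
    rw [hQ]; simp only
    rw [min_eq_right hx.2, max_eq_right hx.1]
  have hcu : ContinuousOn u (Icc a b) :=
    fun x hx => (hu x hx).continuousAt.continuousWithinAt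
  have hcv : ContinuousOn v (Icc a b) :=
    fun x hx => (hv x hx).continuousAt.continuousWithinAt
  set U : ℝ → ℝ := u ∘ Q with hUdef
  set U' : ℝ → ℝ := u' ∘ Q with hU'def
  set V : ℝ → ℝ := v ∘ Q with hVdef
  set V' : ℝ → ℝ := v' ∘ Q with hV'def
  have hUc : Continuous U := hcu.comp_continuous hQc hQmem
  have hU'c : Continuous U' := hu'.comp_continuous hQc hQmem
  have hVc : Continuous V := hcv.comp_continuous hQc hQmem
  have hV'c : Continuous V' := hv'.comp_continuous hQc hQmem
  have hUe : ∀ x ∈ Icc a b, U x = u x := fun x hx => by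
    rw [hUdef]; simp only [Function.comp_apply, hQid x hx]
  have hU'e : ∀ x ∈ Icc a b, U' x = u' x := fun x hx => by
    rw [hU'def]; simp only [Function.comp_apply, hQid x hx]
  have hVe : ∀ x ∈ Icc a b, V x = v x := fun x hx => by
    rw [hVdef]; simp only [Function.comp_apply, hQid x hx]
  have hV'e : ∀ x ∈ Icc a b, V' x = v' x := fun x hx => by
    rw [hV'def]; simp only [Function.comp_apply, hQid x hx]
  -- FTC input for key_cont
  have hFTC : ∀ s ∈ Icc (0:ℝ) (b - a),
      (∫ τ in a..(b - s), (U' τ * V (s + τ) + U τ * V' (s + τ))) = 0 := by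
    intro s hs
    have hsb : a ≤ b - s := by linarith [hs.2]
    have msub : Icc a (b - s) ⊆ Icc a b := fun τ hτ => ⟨hτ.1, by linarith [hτ.2, hs.1]⟩
    have m1 : ∀ τ ∈ Icc a (b - s), s + τ ∈ Icc a b := fun τ hτ =>
      ⟨by linarith [hτ.1, hs.1], by linarith [hτ.2]⟩
    have e : (∫ τ in a..(b - s), (U' τ * V (s + τ) + U τ * V' (s + τ)))
        = ∫ τ in a..(b - s), (u' τ * v (s + τ) + u τ * v' (s + τ)) := by
      refine intervalIntegral.integral_congr fun τ hτ => ?_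
      rw [uIcc_of_le hsb] at hτ
      rw [hU'e τ (msub hτ), hUe τ (msub hτ), hVe _ (m1 τ hτ), hV'e _ (m1 τ hτ)]
    rw [e]
    have hderiv : ∀ τ ∈ Set.uIcc a (b - s),
        HasDerivAt (fun x => u x * v (s + x)) (u' τ * v (s + τ) + u τ * v' (s + τ)) τ := by
      intro τ hτ
      rw [uIcc_of_le hsb] at hτ
      have h1 : HasDerivAt u (u' τ) τ := hu τ (msub hτ)
      have h2 : HasDerivAt (fun x => v (s + x)) (v' (s + τ)) τ := by
        have h3 := hv (s + τ) (m1 τ hτ)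
        have h4 := HasDerivAt.comp τ h3 ((hasDerivAt_id τ).const_add s)
        simpa [Function.comp_def] using h4
      exact h1.mul h2
    have hInt : IntervalIntegrable (fun τ => u' τ * v (s + τ) + u τ * v' (s + τ))
        volume a (b - s) := by
      apply ContinuousOn.intervalIntegrable
      rw [uIcc_of_le hsb]
      have hshift : ContinuousOn (fun τ : ℝ => s + τ) (Icc a (b - s)) :=
        (continuous_const.add continuous_id).continuousOn
      exact ((hu'.mono msub).mul (hcv.comp hshift m1)).add
        ((hcu.mono msub).mul (hv'.comp hshift m1))
    rw [intervalIntegral.integral_eq_sub_of_hasDerivAt hderiv hInt,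
      show s + (b - s) = b by ring, hvb, hua]
    ring
  have key := key_cont β a b hβ0 hβ1 hab U U' V V' hUc hU'c hVc hV'c hFTC
  -- rewrite both sides in terms of the continuous extensions
  have L1 : (∫ t in a..b, ((1 / Real.Gamma (1 - β)) * ∫ τ in a..t, (t - τ) ^ (-β) * u' τ) * v t)
      = (1 / Real.Gamma (1 - β)) * ∫ t in a..b, (∫ τ in a..t, (t - τ) ^ (-β) * U' τ) * V t := by
    rw [← intervalIntegral.integral_const_mul]
    refine intervalIntegral.integral_congr fun t ht => ?_
    rw [uIcc_of_le hab.le] at ht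
    have e : (∫ τ in a..t, (t - τ) ^ (-β) * u' τ) = ∫ τ in a..t, (t - τ) ^ (-β) * U' τ := by
      refine intervalIntegral.integral_congr fun τ hτ => ?_
      rw [uIcc_of_le ht.1] at hτ
      rw [hU'e τ ⟨hτ.1, hτ.2.trans ht.2⟩]
    rw [e, hVe t ht]
    ring
  have R1 : (∫ t in a..b, u t * (-(1 / Real.Gamma (1 - β)) * ∫ τ in t..b, (τ - t) ^ (-β) * v' τ))
      = (1 / Real.Gamma (1 - β)) * ∫ t in a..b, -(U t * ∫ τ in t..b, (τ - t) ^ (-β) * V' τ) := by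
    rw [← intervalIntegral.integral_const_mul]
    refine intervalIntegral.integral_congr fun t ht => ?_
    rw [uIcc_of_le hab.le] at ht
    have e : (∫ τ in t..b, (τ - t) ^ (-β) * v' τ) = ∫ τ in t..b, (τ - t) ^ (-β) * V' τ := by
      refine intervalIntegral.integral_congr fun τ hτ => ?_
      rw [uIcc_of_le ht.2] at hτ
      rw [hV'e τ ⟨ht.1.trans hτ.1, hτ.2⟩]
    rw [e, hUe t ht]
    ring
  rw [L1, R1, key]
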